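/- Let K: 𝕋^{d-1}×𝕋^ℓ → U be C¹ and H: U×𝕋^ℓ → ℝ be C¹, and let Ω(z) = Da(z)ᵀ − Da(z) with X_H defined by Ω(z)X_H(z,φ) = D_zH(z,φ)ᵀ. Then the average over 𝕋^{d-1}×𝕋^ℓ of D_θK(θ,φ)ᵀ Ω(K(θ,φ)) ( X_H(K(θ,φ),φ) − D_φK(θ,φ)·α̂ ) is zero. -/

import Mathlib

/-- Matrix of the exact 2-form `Ω(z) = Da(z)ᵀ − Da(z)`. -/
noncomputable def exactOmega {N : ℕ} (a : (Fin N → ℝ) → (Fin N → ℝ))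
    (z : Fin N → ℝ) (p q : Fin N) : ℝ :=
  fderiv ℝ a z (Pi.single p 1) q - fderiv ℝ a z (Pi.single q 1) p

section AuxAvg14
open MeasureTheory Submodule Pointwise

variable {m ℓ : ℕ}

local notation "E" => ((Fin m → ℝ) × (Fin ℓ → ℝ))

noncomputable def bb (m ℓ : ℕ) : Module.Basis (Fin m ⊕ Fin ℓ) ℝ ((Fin m → ℝ) × (Fin ℓ → ℝ)) :=
  (Pi.basisFun ℝ (Fin m)).prod (Pi.basisFun ℝ (Fin ℓ))

theorem per_span (f : E → ℝ)
    (hper : ∀ (x : E) (p : Fin m → ℤ) (q : Fin ℓ → ℤ),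
      f (x + ((fun i => (p i : ℝ)), fun i => (q i : ℝ))) = f x)
    (l : E) (hl : l ∈ span ℤ (Set.range (bb m ℓ))) (x : E) : f (l + x) = f x := by
  let S : AddSubgroup ((Fin m → ℝ) × (Fin ℓ → ℝ)) :=
  { carrier := {l | ∀ x, f (l + x) = f x}
    zero_mem' := by simp
    add_mem' := by
      intro u v hu hv x
      rw [add_assoc, hu, hv]
    neg_mem' := by
      intro u hu x
      have h := hu (-u + x)
      rw [← add_assoc, add_neg_cancel, zero_add] at h
      exact h.symm }
  have hle : span ℤ (Set.range (bb m ℓ)) ≤ AddSubgroup.toIntSubmodule S := by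
    rw [span_le]
    rintro _ ⟨j, rfl⟩
    rcases j with i | i
    · intro x
      have h := hper x (Pi.single i 1) 0
      have e1 : ((fun j => ((Pi.single i 1 : Fin m → ℤ) j : ℝ)), (fun j => ((0 : Fin ℓ → ℤ) j : ℝ)))
          = (bb m ℓ) (Sum.inl i) := by
        simp [bb, Module.Basis.prod_apply, Pi.basisFun_apply]
        constructor
        · ext j
          by_cases hj : j = i <;> simp [Pi.single_apply, hj]
        · ext j; simp
      rw [e1] at h
      rw [add_comm]
      exact h
    · intro x
      have h := hper x 0 (Pi.single i 1)
      have e1 : ((fun j => ((0 : Fin m → ℤ) j : ℝ)), (fun j => ((Pi.single i 1 : Fin ℓ → ℤ) j : ℝ)))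
          = (bb m ℓ) (Sum.inr i) := by
        simp [bb, Module.Basis.prod_apply, Pi.basisFun_apply]
        constructor
        · ext j; simp
        · ext j
          by_cases hj : j = i <;> simp [Pi.single_apply, hj]
      rw [e1] at h
      rw [add_comm]
      exact h
  exact hle hl x

theorem icc_ae_fd :
    (Set.Icc (0:(Fin m → ℝ) × (Fin ℓ → ℝ)) 1 : Set ((Fin m → ℝ) × (Fin ℓ → ℝ)))
      =ᵐ[volume] ZSpan.fundamentalDomain (bb m ℓ) := by
  have hsub : ZSpan.fundamentalDomain (bb m ℓ) ⊆ Set.Icc (0:(Fin m → ℝ) × (Fin ℓ → ℝ)) 1 := by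
    intro x hx
    rw [ZSpan.mem_fundamentalDomain] at hx
    have hrep1 : ∀ i, ((bb m ℓ).repr x) (Sum.inl i) = x.1 i := fun i => by simp [bb]
    have hrep2 : ∀ i, ((bb m ℓ).repr x) (Sum.inr i) = x.2 i := fun i => by simp [bb]
    simp only [Set.mem_Icc, Prod.le_def, Pi.le_def]
    refine ⟨⟨fun i => ?_, fun i => ?_⟩, fun i => ?_, fun i => ?_⟩
    · have h := (hx (Sum.inl i)).1; rwa [hrep1] at h
    · have h := (hx (Sum.inr i)).1; rwa [hrep2] at h
    · have h := (hx (Sum.inl i)).2.le; rwa [hrep1] at h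
    · have h := (hx (Sum.inr i)).2.le; rwa [hrep2] at h
  have hdiff : volume (Set.Icc (0:(Fin m → ℝ) × (Fin ℓ → ℝ)) 1 \ ZSpan.fundamentalDomain (bb m ℓ)) = 0 := by
    have hsub2 : Set.Icc (0:(Fin m → ℝ) × (Fin ℓ → ℝ)) 1 \ ZSpan.fundamentalDomain (bb m ℓ) ⊆
        (⋃ i : Fin m, {x : (Fin m → ℝ) × (Fin ℓ → ℝ) | x.1 i = 1}) ∪
        (⋃ i : Fin ℓ, {x : (Fin m → ℝ) × (Fin ℓ → ℝ) | x.2 i = 1}) := by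
      rintro x ⟨hx1, hx2⟩
      rw [ZSpan.mem_fundamentalDomain] at hx2
      push_neg at hx2
      obtain ⟨j, hj⟩ := hx2
      simp only [Set.mem_Icc, Prod.le_def, Pi.le_def] at hx1
      obtain ⟨⟨h01, h02⟩, h11, h12⟩ := hx1
      rcases j with i | i
      · left
        refine Set.mem_iUnion.2 ⟨i, ?_⟩
        have hrep : (bb m ℓ).repr x (Sum.inl i) = x.1 i := by
          simp [bb, Module.Basis.prod_repr_inl, Pi.basisFun_repr]
        rw [hrep] at hj
        rw [Set.mem_Ico] at hj
        push_neg at hj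
        have := hj (h01 i)
        exact le_antisymm (h11 i) this
      · right
        refine Set.mem_iUnion.2 ⟨i, ?_⟩
        have hrep : (bb m ℓ).repr x (Sum.inr i) = x.2 i := by
          simp [bb, Module.Basis.prod_repr_inr, Pi.basisFun_repr]
        rw [hrep] at hj
        rw [Set.mem_Ico] at hj
        push_neg at hj
        have := hj (h02 i)
        exact le_antisymm (h12 i) this
    refine measure_mono_null hsub2 ?_
    refine measure_union_null (measure_iUnion_null fun i => ?_) (measure_iUnion_null fun i => ?_)
    · have : {x : (Fin m → ℝ) × (Fin ℓ → ℝ) | x.1 i = 1} = {y : Fin m → ℝ | y i = 1} ×ˢ Set.univ := by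
        ext x; simp [Set.mem_prod]
      rw [this]
      have h0 : (volume : Measure (Fin m → ℝ)) {y : Fin m → ℝ | y i = 1} = 0 := by
        have := MeasureTheory.Measure.pi_hyperplane (fun _ : Fin m => (volume : Measure ℝ)) i (1:ℝ)
        simpa [MeasureTheory.volume_pi] using this
      rw [show (volume : Measure ((Fin m → ℝ) × (Fin ℓ → ℝ))) = (volume : Measure (Fin m → ℝ)).prod volume from rfl]
      rw [MeasureTheory.Measure.prod_prod, h0, zero_mul]
    · have : {x : (Fin m → ℝ) × (Fin ℓ → ℝ) | x.2 i = 1} = Set.univ ×ˢ {y : Fin ℓ → ℝ | y i = 1} := by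
        ext x; simp [Set.mem_prod]
      rw [this]
      have h0 : (volume : Measure (Fin ℓ → ℝ)) {y : Fin ℓ → ℝ | y i = 1} = 0 := by
        have := MeasureTheory.Measure.pi_hyperplane (fun _ : Fin ℓ => (volume : Measure ℝ)) i (1:ℝ)
        simpa [MeasureTheory.volume_pi] using this
      rw [show (volume : Measure ((Fin m → ℝ) × (Fin ℓ → ℝ))) = (volume : Measure (Fin m → ℝ)).prod volume from rfl]
      rw [MeasureTheory.Measure.prod_prod, h0, mul_zero]
  rw [MeasureTheory.ae_eq_set]
  exact ⟨hdiff, by rw [Set.diff_eq_empty.2 hsub]; simp⟩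

theorem integral_Icc_shift (f : (Fin m → ℝ) × (Fin ℓ → ℝ) → ℝ)
    (hper : ∀ (x : (Fin m → ℝ) × (Fin ℓ → ℝ)) (p : Fin m → ℤ) (q : Fin ℓ → ℤ),
      f (x + ((fun i => (p i : ℝ)), fun i => (q i : ℝ))) = f x)
    (v : (Fin m → ℝ) × (Fin ℓ → ℝ)) :
    ∫ x in Set.Icc (0:(Fin m → ℝ) × (Fin ℓ → ℝ)) 1, f (x + v)
      = ∫ x in Set.Icc (0:(Fin m → ℝ) × (Fin ℓ → ℝ)) 1, f x := by
  haveI hli : (volume : Measure ((Fin m → ℝ) × (Fin ℓ → ℝ))).IsAddLeftInvariant := by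
    rw [show (volume : Measure ((Fin m → ℝ) × (Fin ℓ → ℝ)))
      = ((volume : Measure (Fin m → ℝ)).prod volume) from rfl]
    infer_instance
  haveI : VAddInvariantMeasure ((Fin m → ℝ) × (Fin ℓ → ℝ)) ((Fin m → ℝ) × (Fin ℓ → ℝ)) volume :=
    ⟨fun v s _ => measure_preimage_add volume v s⟩
  set D := ZSpan.fundamentalDomain (bb m ℓ) with hDdef
  have hD := ZSpan.isAddFundamentalDomain' (bb m ℓ)
    (volume : Measure ((Fin m → ℝ) × (Fin ℓ → ℝ)))
  have hDv := hD.vadd_of_comm (G' := (Fin m → ℝ) × (Fin ℓ → ℝ)) v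
  have hMP := measurePreserving_add_left (volume : Measure ((Fin m → ℝ) × (Fin ℓ → ℝ))) v
  have hemb : MeasurableEmbedding (fun x : (Fin m → ℝ) × (Fin ℓ → ℝ) => v + x) :=
    (MeasurableEquiv.addLeft v).measurableEmbedding
  have hpre : (fun x : (Fin m → ℝ) × (Fin ℓ → ℝ) => v + x) ⁻¹' (v +ᵥ D) = D := by
    ext x
    simp [Set.mem_vadd_set_iff_neg_vadd_mem, vadd_eq_add]
  calc ∫ x in Set.Icc (0:(Fin m → ℝ) × (Fin ℓ → ℝ)) 1, f (x + v)
      = ∫ x in Set.Icc (0:(Fin m → ℝ) × (Fin ℓ → ℝ)) 1, f (v + x) := by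
        simp_rw [add_comm]
    _ = ∫ x in D, f (v + x) := setIntegral_congr_set icc_ae_fd
    _ = ∫ x in (v +ᵥ D), f x := by
        have := hMP.setIntegral_preimage_emb hemb f (v +ᵥ D)
        rwa [hpre] at this
    _ = ∫ x in D, f x := by
        haveI : Countable (span ℤ (Set.range ⇑(bb m ℓ))).toAddSubgroup := by
          change Countable (span ℤ (Set.range ⇑(bb m ℓ)))
          infer_instance
        refine hDv.setIntegral_eq hD (f := f) ?_
        intro g x
        exact per_span f hper g ((Submodule.mem_toAddSubgroup _).mp g.2) x
    _ = ∫ x in Set.Icc (0:(Fin m → ℝ) × (Fin ℓ → ℝ)) 1, f x :=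
        (setIntegral_congr_set icc_ae_fd).symm

section Quot

variable {EE : Type*} [NormedAddCommGroup EE] [NormedSpace ℝ EE]

theorem quot_tendsto (f : EE → ℝ) (hf : ContDiff ℝ 1 f) (v : EE) (x : EE)
    {hn : ℕ → ℝ} (hhn : ∀ n, hn n ≠ 0) (hlim : Filter.Tendsto hn Filter.atTop (nhds 0)) :
    Filter.Tendsto (fun n => (f (x + hn n • v) - f x) / hn n) Filter.atTop
      (nhds (fderiv ℝ f x v)) := by
  have hc : HasDerivAt (fun t : ℝ => x + t • v) v 0 := by
    simpa using ((hasDerivAt_id (0:ℝ)).smul_const v).const_add x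
  have hg : HasDerivAt (fun t : ℝ => f (x + t • v)) (fderiv ℝ f x v) 0 := by
    have hd := (hf.differentiable one_ne_zero (x + (0:ℝ) • v)).hasFDerivAt
    have := hd.comp_hasDerivAt 0 hc
    simp only [zero_smul, add_zero] at this
    exact this
  have hs := hasDerivAt_iff_tendsto_slope.mp hg
  have hmem : Filter.Tendsto hn Filter.atTop (nhdsWithin 0 {(0:ℝ)}ᶜ) := by
    refine tendsto_nhdsWithin_of_tendsto_nhds_of_eventually_within hn hlim ?_
    exact Filter.Eventually.of_forall fun n => hhn n
  have := hs.comp hmem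
  refine this.congr fun n => ?_
  simp [slope_def_field, div_eq_inv_mul]

theorem quot_bound (f : EE → ℝ) (hf : ContDiff ℝ 1 f) (v : EE) [ProperSpace EE] :
    ∃ C : ℝ, 0 ≤ C ∧ ∀ x : EE, ‖x‖ ≤ 1 → ∀ h : ℝ, |h| ≤ 1 → h ≠ 0 →
      |(f (x + h • v) - f x) / h| ≤ C := by
  obtain ⟨C, hC⟩ := (isCompact_closedBall (0:EE) (1 + ‖v‖)).exists_bound_of_continuousOn
    ((hf.continuous_fderiv one_ne_zero).norm.continuousOn)
  have hC0 : 0 ≤ C := le_trans (norm_nonneg _) (hC 0 (by simp; positivity))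
  refine ⟨C * ‖v‖, by positivity, fun x hx h hh hh0 => ?_⟩
  have hxs : x ∈ Metric.closedBall (0:EE) (1 + ‖v‖) := by
    simp only [Metric.mem_closedBall, dist_zero_right]
    nlinarith [norm_nonneg v]
  have hys : x + h • v ∈ Metric.closedBall (0:EE) (1 + ‖v‖) := by
    simp only [Metric.mem_closedBall, dist_zero_right]
    calc ‖x + h • v‖ ≤ ‖x‖ + ‖h • v‖ := norm_add_le _ _
      _ ≤ 1 + ‖v‖ := by
          rw [norm_smul]
          have : |h| * ‖v‖ ≤ 1 * ‖v‖ := by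
            apply mul_le_mul_of_nonneg_right _ (norm_nonneg v)
            simpa using hh
          simp only [Real.norm_eq_abs]
          nlinarith [norm_nonneg v]
  have key : ‖f (x + h • v) - f x‖ ≤ C * ‖(x + h • v) - x‖ := by
    refine Convex.norm_image_sub_le_of_norm_fderiv_le
      (fun y _ => hf.differentiable one_ne_zero y) ?_
      (convex_closedBall _ _) hxs hys
    intro y hy
    simpa using hC y hy
  rw [abs_div]
  rw [div_le_iff₀ (abs_pos.mpr hh0)]
  have h2 : ‖(x + h • v) - x‖ = |h| * ‖v‖ := by
    simp [norm_smul]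
  rw [h2] at key
  calc |f (x + h • v) - f x| ≤ C * (|h| * ‖v‖) := key
    _ = C * ‖v‖ * |h| := by ring

end Quot

section Core

variable {m ℓ : ℕ}

/-- Periodicity predicate. -/
def IsPer (f : (Fin m → ℝ) × (Fin ℓ → ℝ) → ℝ) : Prop :=
  ∀ (x : (Fin m → ℝ) × (Fin ℓ → ℝ)) (p : Fin m → ℤ) (q : Fin ℓ → ℤ),
    f (x + ((fun i => (p i : ℝ)), fun i => (q i : ℝ))) = f x

theorem IsPer.shift {f : (Fin m → ℝ) × (Fin ℓ → ℝ) → ℝ} (hper : IsPer f)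
    (c : (Fin m → ℝ) × (Fin ℓ → ℝ)) : IsPer (fun x => f (x + c)) := by
  intro x p q
  have e : x + ((fun i => (p i : ℝ)), fun i => (q i : ℝ)) + c
      = (x + c) + ((fun i => (p i : ℝ)), fun i => (q i : ℝ)) := by abel
  simp only [e]
  exact hper (x + c) p q

theorem IsPer.mul {f g : (Fin m → ℝ) × (Fin ℓ → ℝ) → ℝ} (hf : IsPer f) (hg : IsPer g) :
    IsPer (fun x => f x * g x) := by
  intro x p q
  simp only [hf x p q, hg x p q]

theorem norm_le_one_of_mem_Icc {x : (Fin m → ℝ) × (Fin ℓ → ℝ)}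
    (hx : x ∈ Set.Icc (0 : (Fin m → ℝ) × (Fin ℓ → ℝ)) 1) : ‖x‖ ≤ 1 := by
  simp only [Set.mem_Icc, Prod.le_def, Pi.le_def, Prod.fst_zero, Prod.snd_zero, Pi.zero_apply,
    Prod.fst_one, Prod.snd_one, Pi.one_apply] at hx
  obtain ⟨⟨h1, h2⟩, h3, h4⟩ := hx
  rw [Prod.norm_def]
  refine max_le ?_ ?_
  · refine (pi_norm_le_iff_of_nonneg zero_le_one).2 fun i => ?_
    rw [Real.norm_eq_abs, abs_le]
    exact ⟨by linarith [h1 i], by simpa using h3 i⟩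
  · refine (pi_norm_le_iff_of_nonneg zero_le_one).2 fun i => ?_
    rw [Real.norm_eq_abs, abs_le]
    exact ⟨by linarith [h2 i], by simpa using h4 i⟩

theorem integrableOn_Icc_of_continuous {f : (Fin m → ℝ) × (Fin ℓ → ℝ) → ℝ} (hf : Continuous f) :
    MeasureTheory.IntegrableOn f (Set.Icc (0 : (Fin m → ℝ) × (Fin ℓ → ℝ)) 1) volume :=
  hf.continuousOn.integrableOn_compact isCompact_Icc

theorem cont_shift {f : (Fin m → ℝ) × (Fin ℓ → ℝ) → ℝ} (hf : Continuous f)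
    (c : (Fin m → ℝ) × (Fin ℓ → ℝ)) : Continuous (fun x => f (x + c)) :=
  hf.comp (continuous_id.add continuous_const)

end Core

section L12

variable {m ℓ : ℕ}

theorem seq_ne (n : ℕ) : (1 / ((n : ℝ) + 1)) ≠ 0 := by positivity

theorem seq_abs_le (n : ℕ) : |1 / ((n : ℝ) + 1)| ≤ 1 := by
  rw [abs_of_pos (by positivity)]
  rw [div_le_one (by positivity)]
  linarith [Nat.cast_nonneg (α := ℝ) n]

theorem seq_tendsto : Filter.Tendsto (fun n : ℕ => 1 / ((n : ℝ) + 1)) Filter.atTop (nhds 0) :=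
  tendsto_one_div_add_atTop_nhds_zero_nat

theorem volume_Icc_lt_top :
    volume (Set.Icc (0 : (Fin m → ℝ) × (Fin ℓ → ℝ)) 1) < ⊤ :=
  isCompact_Icc.measure_lt_top

/-- L1: the integral of a directional derivative of a C¹ periodic function vanishes. -/
theorem integral_fderiv_eq_zero (f : (Fin m → ℝ) × (Fin ℓ → ℝ) → ℝ)
    (hf : ContDiff ℝ 1 f) (hper : IsPer f) (v : (Fin m → ℝ) × (Fin ℓ → ℝ)) :
    ∫ x in Set.Icc (0 : (Fin m → ℝ) × (Fin ℓ → ℝ)) 1, fderiv ℝ f x v = 0 := by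
  obtain ⟨C, hC0, hC⟩ := quot_bound f hf v
  set hn : ℕ → ℝ := fun n => 1 / ((n : ℝ) + 1) with hhn_def
  have key : Filter.Tendsto
      (fun n => ∫ x in Set.Icc (0 : (Fin m → ℝ) × (Fin ℓ → ℝ)) 1,
        (f (x + hn n • v) - f x) / hn n) Filter.atTop
      (nhds (∫ x in Set.Icc (0 : (Fin m → ℝ) × (Fin ℓ → ℝ)) 1, fderiv ℝ f x v)) := by
    refine MeasureTheory.tendsto_integral_of_dominated_convergence (fun _ => C) ?_ ?_ ?_ ?_
    · intro n
      exact (((cont_shift hf.continuous (hn n • v)).sub hf.continuous).div_const _).aestronglyMeasurable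
    · exact MeasureTheory.integrableOn_const volume_Icc_lt_top.ne
    · intro n
      refine (MeasureTheory.ae_restrict_mem measurableSet_Icc).mono fun x hx => ?_
      rw [Real.norm_eq_abs]
      exact hC x (norm_le_one_of_mem_Icc hx) (hn n) (seq_abs_le n) (seq_ne n)
    · refine Filter.Eventually.of_forall fun x => ?_
      exact quot_tendsto f hf v x seq_ne seq_tendsto
  have hzero : ∀ n, (∫ x in Set.Icc (0 : (Fin m → ℝ) × (Fin ℓ → ℝ)) 1,
      (f (x + hn n • v) - f x) / hn n) = 0 := by
    intro n
    rw [MeasureTheory.integral_div]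
    rw [MeasureTheory.integral_sub
      (integrableOn_Icc_of_continuous (cont_shift hf.continuous _))
      (integrableOn_Icc_of_continuous hf.continuous)]
    rw [integral_Icc_shift f hper (hn n • v), sub_self, zero_div]
  have h2 : Filter.Tendsto
      (fun n => ∫ x in Set.Icc (0 : (Fin m → ℝ) × (Fin ℓ → ℝ)) 1,
        (f (x + hn n • v) - f x) / hn n) Filter.atTop (nhds 0) := by
    simpa [hzero] using (tendsto_const_nhds :
      Filter.Tendsto (fun _ : ℕ => (0:ℝ)) Filter.atTop (nhds 0))
  exact tendsto_nhds_unique key h2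

end L12

section L2sec

variable {m ℓ : ℕ}

/-- Expansion of the integral of a product of two difference quotients. -/
theorem expand_quot (f g : (Fin m → ℝ) × (Fin ℓ → ℝ) → ℝ)
    (hf : ContDiff ℝ 1 f) (hg : ContDiff ℝ 1 g) (hfper : IsPer f) (hgper : IsPer g)
    (u₁ u₂ : (Fin m → ℝ) × (Fin ℓ → ℝ)) (h : ℝ) :
    (∫ x in Set.Icc (0 : (Fin m → ℝ) × (Fin ℓ → ℝ)) 1,
      ((f (x + u₁) - f x) / h) * ((g (x + u₂) - g x) / h))
    = ((∫ x in Set.Icc (0 : (Fin m → ℝ) × (Fin ℓ → ℝ)) 1, f (x + (u₁ - u₂)) * g x)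
      - (∫ x in Set.Icc (0 : (Fin m → ℝ) × (Fin ℓ → ℝ)) 1, f (x + u₁) * g x)
      - (∫ x in Set.Icc (0 : (Fin m → ℝ) × (Fin ℓ → ℝ)) 1, f (x - u₂) * g x)
      + (∫ x in Set.Icc (0 : (Fin m → ℝ) × (Fin ℓ → ℝ)) 1, f x * g x)) / (h * h) := by
  have hcf := hf.continuous
  have hcg := hg.continuous
  have e1 : ∀ x : (Fin m → ℝ) × (Fin ℓ → ℝ),
      ((f (x + u₁) - f x) / h) * ((g (x + u₂) - g x) / h)
      = (f (x + u₁) * g (x + u₂) - f (x + u₁) * g x - f x * g (x + u₂) + f x * g x)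
        / (h * h) := by
    intro x; field_simp; ring
  simp_rw [e1]
  rw [MeasureTheory.integral_div]
  congr 1
  have i1 : MeasureTheory.IntegrableOn
      (fun x => f (x + u₁) * g (x + u₂)) (Set.Icc (0 : (Fin m → ℝ) × (Fin ℓ → ℝ)) 1) volume :=
    integrableOn_Icc_of_continuous ((cont_shift hcf u₁).mul (cont_shift hcg u₂))
  have i2 : MeasureTheory.IntegrableOn
      (fun x => f (x + u₁) * g x) (Set.Icc (0 : (Fin m → ℝ) × (Fin ℓ → ℝ)) 1) volume :=
    integrableOn_Icc_of_continuous ((cont_shift hcf u₁).mul hcg)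
  have i3 : MeasureTheory.IntegrableOn
      (fun x => f x * g (x + u₂)) (Set.Icc (0 : (Fin m → ℝ) × (Fin ℓ → ℝ)) 1) volume :=
    integrableOn_Icc_of_continuous (hcf.mul (cont_shift hcg u₂))
  have i4 : MeasureTheory.IntegrableOn
      (fun x => f x * g x) (Set.Icc (0 : (Fin m → ℝ) × (Fin ℓ → ℝ)) 1) volume :=
    integrableOn_Icc_of_continuous (hcf.mul hcg)
  have i12 : MeasureTheory.IntegrableOn
      (fun x => f (x + u₁) * g (x + u₂) - f (x + u₁) * g x)
      (Set.Icc (0 : (Fin m → ℝ) × (Fin ℓ → ℝ)) 1) volume := i1.sub i2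
  have i123 : MeasureTheory.IntegrableOn
      (fun x => f (x + u₁) * g (x + u₂) - f (x + u₁) * g x - f x * g (x + u₂))
      (Set.Icc (0 : (Fin m → ℝ) × (Fin ℓ → ℝ)) 1) volume := i12.sub i3
  rw [MeasureTheory.integral_add i123 i4,
    MeasureTheory.integral_sub i12 i3, MeasureTheory.integral_sub i1 i2]
  have k1 : (∫ x in Set.Icc (0 : (Fin m → ℝ) × (Fin ℓ → ℝ)) 1, f (x + u₁) * g (x + u₂))
      = ∫ x in Set.Icc (0 : (Fin m → ℝ) × (Fin ℓ → ℝ)) 1, f (x + (u₁ - u₂)) * g x := by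
    have key := integral_Icc_shift (fun x => f (x + (u₁ - u₂)) * g x)
      ((hfper.shift (u₁ - u₂)).mul hgper) u₂
    have e2 : ∀ x : (Fin m → ℝ) × (Fin ℓ → ℝ),
        f (x + u₂ + (u₁ - u₂)) * g (x + u₂) = f (x + u₁) * g (x + u₂) := by
      intro x
      congr 2
      abel
    simp_rw [e2] at key
    exact key
  have k2 : (∫ x in Set.Icc (0 : (Fin m → ℝ) × (Fin ℓ → ℝ)) 1, f x * g (x + u₂))
      = ∫ x in Set.Icc (0 : (Fin m → ℝ) × (Fin ℓ → ℝ)) 1, f (x - u₂) * g x := by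
    have hfshift : IsPer (fun x => f (x - u₂)) := by
      intro x' p q
      have e : x' + ((fun i => ((p i : ℝ))), fun i => ((q i : ℝ))) - u₂
          = (x' - u₂) + ((fun i => ((p i : ℝ))), fun i => ((q i : ℝ))) := by abel
      simp only [e]
      exact hfper (x' - u₂) p q
    have key := integral_Icc_shift (fun x => f (x - u₂) * g x) (hfshift.mul hgper) u₂
    have e2 : ∀ x : (Fin m → ℝ) × (Fin ℓ → ℝ),
        f (x + u₂ - u₂) * g (x + u₂) = f x * g (x + u₂) := by
      intro x
      congr 2
      abel
    simp_rw [e2] at key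
    exact key
  rw [k1, k2]

end L2sec

theorem cont_fderiv_apply {m ℓ : ℕ} {f : (Fin m → ℝ) × (Fin ℓ → ℝ) → ℝ}
    (hf : ContDiff ℝ 1 f) (v : (Fin m → ℝ) × (Fin ℓ → ℝ)) :
    Continuous (fun x => fderiv ℝ f x v) :=
  (hf.continuous_fderiv one_ne_zero).clm_apply continuous_const

/-- L2: the "Jacobian" pairing of two C¹ periodic functions integrates to zero. -/
theorem integral_jacobian_pair {m ℓ : ℕ} (f g : (Fin m → ℝ) × (Fin ℓ → ℝ) → ℝ)
    (hf : ContDiff ℝ 1 f) (hg : ContDiff ℝ 1 g) (hfper : IsPer f) (hgper : IsPer g)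
    (v w : (Fin m → ℝ) × (Fin ℓ → ℝ)) :
    (∫ x in Set.Icc (0 : (Fin m → ℝ) × (Fin ℓ → ℝ)) 1,
      (fderiv ℝ f x v * fderiv ℝ g x w - fderiv ℝ f x w * fderiv ℝ g x v)) = 0 := by
  obtain ⟨Cfv, hCfv0, hCfv⟩ := quot_bound f hf v
  obtain ⟨Cfw, hCfw0, hCfw⟩ := quot_bound f hf w
  obtain ⟨Cgv, hCgv0, hCgv⟩ := quot_bound g hg v
  obtain ⟨Cgw, hCgw0, hCgw⟩ := quot_bound g hg w
  set hn : ℕ → ℝ := fun n => 1 / ((n : ℝ) + 1) with hhn_def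
  have hn'ne : ∀ n : ℕ, -hn n ≠ 0 := fun n => neg_ne_zero.2 (seq_ne n)
  have hn'abs : ∀ n : ℕ, |(-hn n)| ≤ 1 := fun n => by rw [abs_neg]; exact seq_abs_le n
  have hn'lim : Filter.Tendsto (fun n : ℕ => -hn n) Filter.atTop (nhds 0) := by
    have h := seq_tendsto.neg
    rw [neg_zero] at h
    exact h
  -- the two sequences of integrals
  set In : ℕ → ℝ := fun n => ∫ x in Set.Icc (0 : (Fin m → ℝ) × (Fin ℓ → ℝ)) 1,
    ((f (x + hn n • v) - f x) / hn n) * ((g (x + hn n • w) - g x) / hn n) with hIn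
  set Jn : ℕ → ℝ := fun n => ∫ x in Set.Icc (0 : (Fin m → ℝ) × (Fin ℓ → ℝ)) 1,
    ((f (x + (-hn n) • w) - f x) / (-hn n)) * ((g (x + (-hn n) • v) - g x) / (-hn n)) with hJn
  have h_eq : ∀ n, In n = Jn n := by
    intro n
    rw [hIn, hJn]
    simp only
    rw [expand_quot f g hf hg hfper hgper (hn n • v) (hn n • w) (hn n),
      expand_quot f g hf hg hfper hgper ((-hn n) • w) ((-hn n) • v) (-hn n)]
    simp_rw [neg_smul, neg_sub_neg, sub_neg_eq_add, ← sub_eq_add_neg, neg_mul_neg]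
    ring
  have K1 : Filter.Tendsto In Filter.atTop
      (nhds (∫ x in Set.Icc (0 : (Fin m → ℝ) × (Fin ℓ → ℝ)) 1,
        fderiv ℝ f x v * fderiv ℝ g x w)) := by
    refine MeasureTheory.tendsto_integral_of_dominated_convergence (fun _ => Cfv * Cgw) ?_ ?_ ?_ ?_
    · intro n
      exact ((((cont_shift hf.continuous _).sub hf.continuous).div_const _).mul
        (((cont_shift hg.continuous _).sub hg.continuous).div_const _)).aestronglyMeasurable
    · exact MeasureTheory.integrableOn_const volume_Icc_lt_top.ne
    · intro n
      refine (MeasureTheory.ae_restrict_mem measurableSet_Icc).mono fun x hx => ?_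
      rw [Real.norm_eq_abs, abs_mul]
      exact mul_le_mul (hCfv x (norm_le_one_of_mem_Icc hx) _ (seq_abs_le n) (seq_ne n))
        (hCgw x (norm_le_one_of_mem_Icc hx) _ (seq_abs_le n) (seq_ne n)) (abs_nonneg _) hCfv0
    · refine Filter.Eventually.of_forall fun x => ?_
      exact (quot_tendsto f hf v x seq_ne seq_tendsto).mul
        (quot_tendsto g hg w x seq_ne seq_tendsto)
  have K2 : Filter.Tendsto Jn Filter.atTop
      (nhds (∫ x in Set.Icc (0 : (Fin m → ℝ) × (Fin ℓ → ℝ)) 1,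
        fderiv ℝ f x w * fderiv ℝ g x v)) := by
    refine MeasureTheory.tendsto_integral_of_dominated_convergence (fun _ => Cfw * Cgv) ?_ ?_ ?_ ?_
    · intro n
      exact ((((cont_shift hf.continuous _).sub hf.continuous).div_const _).mul
        (((cont_shift hg.continuous _).sub hg.continuous).div_const _)).aestronglyMeasurable
    · exact MeasureTheory.integrableOn_const volume_Icc_lt_top.ne
    · intro n
      refine (MeasureTheory.ae_restrict_mem measurableSet_Icc).mono fun x hx => ?_
      rw [Real.norm_eq_abs, abs_mul]
      exact mul_le_mul (hCfw x (norm_le_one_of_mem_Icc hx) _ (hn'abs n) (hn'ne n))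
        (hCgv x (norm_le_one_of_mem_Icc hx) _ (hn'abs n) (hn'ne n)) (abs_nonneg _) hCfw0
    · refine Filter.Eventually.of_forall fun x => ?_
      exact (quot_tendsto f hf w x hn'ne hn'lim).mul
        (quot_tendsto g hg v x hn'ne hn'lim)
  have hmain : (∫ x in Set.Icc (0 : (Fin m → ℝ) × (Fin ℓ → ℝ)) 1,
      fderiv ℝ f x v * fderiv ℝ g x w)
      = ∫ x in Set.Icc (0 : (Fin m → ℝ) × (Fin ℓ → ℝ)) 1,
        fderiv ℝ f x w * fderiv ℝ g x v :=
    tendsto_nhds_unique K1 (K2.congr fun n => (h_eq n).symm)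
  rw [MeasureTheory.integral_sub (f := fun x => fderiv ℝ f x v * fderiv ℝ g x w)
    (g := fun x => fderiv ℝ f x w * fderiv ℝ g x v)
    (integrableOn_Icc_of_continuous ((cont_fderiv_apply hf v).mul (cont_fderiv_apply hg w)))
    (integrableOn_Icc_of_continuous ((cont_fderiv_apply hf w).mul (cont_fderiv_apply hg v)))]
  rw [hmain, sub_self]

theorem clm_expand {N : ℕ} {W : Type*} [NormedAddCommGroup W] [NormedSpace ℝ W]
    (L : (Fin N → ℝ) →L[ℝ] W) (u : Fin N → ℝ) :
    L u = ∑ p, u p • L (Pi.single p 1) := by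
  have hu : u = ∑ p, u p • (Pi.single p 1 : Fin N → ℝ) := by
    ext j
    rw [Finset.sum_apply]
    simp [Pi.single_apply]
  conv_lhs => rw [hu]
  rw [map_sum]
  simp [_root_.map_smul]


/-- Pointwise identity: the integrand decomposes into a derivative of `H∘(K, φ)` minus
a sum of Jacobian-type pairings. -/
theorem pointwise_decomp
    (N m ℓ : ℕ) (αhat : Fin ℓ → ℝ)
    (a : (Fin N → ℝ) → (Fin N → ℝ)) (ha : ContDiff ℝ 1 a)
    (H : (Fin N → ℝ) → (Fin ℓ → ℝ) → ℝ)
    (hH : ContDiff ℝ 1 (fun q : (Fin N → ℝ) × (Fin ℓ → ℝ) => H q.1 q.2))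
    (XH : (Fin N → ℝ) → (Fin ℓ → ℝ) → (Fin N → ℝ))
    (hXH : ∀ (z : Fin N → ℝ) (φv : Fin ℓ → ℝ) (p : Fin N),
      (∑ q, exactOmega a z p q * XH z φv q)
        = fderiv ℝ (fun z' => H z' φv) z (Pi.single p 1))
    (K : (Fin m → ℝ) × (Fin ℓ → ℝ) → (Fin N → ℝ)) (hK : ContDiff ℝ 1 K)
    (i : Fin m) (x : (Fin m → ℝ) × (Fin ℓ → ℝ)) :
    (∑ p, ∑ q, (fderiv ℝ (fun θ' => K (θ', x.2)) x.1 (Pi.single i 1)) p *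
          exactOmega a (K x) p q *
          (XH (K x) x.2 q - (fderiv ℝ (fun φ' => K (x.1, φ')) x.2 αhat) q))
    = fderiv ℝ (fun y => H (K y) y.2) x ((Pi.single i 1 : Fin m → ℝ), (0 : Fin ℓ → ℝ))
      - ∑ q, (fderiv ℝ (fun y => a (K y) q) x ((Pi.single i 1 : Fin m → ℝ), (0 : Fin ℓ → ℝ))
                * fderiv ℝ (fun y => K y q) x ((0 : Fin m → ℝ), αhat)
              - fderiv ℝ (fun y => a (K y) q) x ((0 : Fin m → ℝ), αhat)
                * fderiv ℝ (fun y => K y q) x ((Pi.single i 1 : Fin m → ℝ), (0 : Fin ℓ → ℝ))) := by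
  set v : (Fin m → ℝ) × (Fin ℓ → ℝ) := ((Pi.single i 1 : Fin m → ℝ), (0 : Fin ℓ → ℝ)) with hv
  set w : (Fin m → ℝ) × (Fin ℓ → ℝ) := ((0 : Fin m → ℝ), αhat) with hw
  have hKd : DifferentiableAt ℝ K x := hK.differentiable one_ne_zero x
  have had : DifferentiableAt ℝ a (K x) := ha.differentiable one_ne_zero (K x)
  set A : Fin N → ℝ := fderiv ℝ K x v with hA
  set B : Fin N → ℝ := fderiv ℝ K x w with hB
  set Da : (Fin N → ℝ) →L[ℝ] (Fin N → ℝ) := fderiv ℝ a (K x) with hDa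
  -- the partial derivatives are full derivatives in directions v, w
  have hAeq : (fderiv ℝ (fun θ' => K (θ', x.2)) x.1) (Pi.single i 1) = A := by
    have h1 : HasFDerivAt (fun θ' : Fin m → ℝ => (θ', x.2))
        (ContinuousLinearMap.inl ℝ (Fin m → ℝ) (Fin ℓ → ℝ)) x.1 :=
      hasFDerivAt_prodMk_left x.1 x.2
    have h2 : HasFDerivAt (fun θ' : Fin m → ℝ => K (θ', x.2))
        ((fderiv ℝ K x).comp (ContinuousLinearMap.inl ℝ (Fin m → ℝ) (Fin ℓ → ℝ))) x.1 :=
      HasFDerivAt.comp x.1 hKd.hasFDerivAt h1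
    rw [h2.fderiv]
    rfl
  have hBeq : (fderiv ℝ (fun φ' => K (x.1, φ')) x.2) αhat = B := by
    have h1 : HasFDerivAt (fun φ' : Fin ℓ → ℝ => (x.1, φ'))
        (ContinuousLinearMap.inr ℝ (Fin m → ℝ) (Fin ℓ → ℝ)) x.2 :=
      hasFDerivAt_prodMk_right x.1 x.2
    have h2 : HasFDerivAt (fun φ' : Fin ℓ → ℝ => K (x.1, φ'))
        ((fderiv ℝ K x).comp (ContinuousLinearMap.inr ℝ (Fin m → ℝ) (Fin ℓ → ℝ))) x.2 :=
      HasFDerivAt.comp x.2 hKd.hasFDerivAt h1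
    rw [h2.fderiv]
    rfl
  -- derivative of the components of a ∘ K and K
  have hfq : ∀ (q : Fin N) (d : (Fin m → ℝ) × (Fin ℓ → ℝ)),
      fderiv ℝ (fun y => a (K y) q) x d = Da (fderiv ℝ K x d) q := by
    intro q d
    have h2 : HasFDerivAt (fun y => a (K y) q)
        ((ContinuousLinearMap.proj q).comp (Da.comp (fderiv ℝ K x))) x := by
      exact (ContinuousLinearMap.proj q).hasFDerivAt.comp x
        (had.hasFDerivAt.comp x hKd.hasFDerivAt)
    rw [h2.fderiv]
    rfl
  have hgq : ∀ (q : Fin N) (d : (Fin m → ℝ) × (Fin ℓ → ℝ)),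
      fderiv ℝ (fun y => K y q) x d = fderiv ℝ K x d q := by
    intro q d
    have h2 : HasFDerivAt (fun y => K y q)
        ((ContinuousLinearMap.proj q).comp (fderiv ℝ K x)) x := by
      exact (ContinuousLinearMap.proj q).hasFDerivAt.comp x hKd.hasFDerivAt
    rw [h2.fderiv]
    rfl
  -- derivative of F := H (K y) y.2 in direction v
  have hFd : fderiv ℝ (fun y => H (K y) y.2) x v
      = fderiv ℝ (fun z' => H z' x.2) (K x) A := by
    have hHd : DifferentiableAt ℝ (fun q : (Fin N → ℝ) × (Fin ℓ → ℝ) => H q.1 q.2) (K x, x.2) :=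
      hH.differentiable one_ne_zero _
    have hG : HasFDerivAt (fun y : (Fin m → ℝ) × (Fin ℓ → ℝ) => (K y, y.2))
        ((fderiv ℝ K x).prod (ContinuousLinearMap.snd ℝ (Fin m → ℝ) (Fin ℓ → ℝ))) x :=
      hKd.hasFDerivAt.prodMk hasFDerivAt_snd
    have h2 : HasFDerivAt (fun y => H (K y) y.2)
        ((fderiv ℝ (fun q : (Fin N → ℝ) × (Fin ℓ → ℝ) => H q.1 q.2) (K x, x.2)).comp
          ((fderiv ℝ K x).prod (ContinuousLinearMap.snd ℝ (Fin m → ℝ) (Fin ℓ → ℝ)))) x :=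
      by have := HasFDerivAt.comp x hHd.hasFDerivAt hG; exact this
    have h3 : HasFDerivAt (fun z' => H z' x.2)
        ((fderiv ℝ (fun q : (Fin N → ℝ) × (Fin ℓ → ℝ) => H q.1 q.2) (K x, x.2)).comp
          (ContinuousLinearMap.inl ℝ (Fin N → ℝ) (Fin ℓ → ℝ))) (K x) :=
      by have := HasFDerivAt.comp (K x) hHd.hasFDerivAt (hasFDerivAt_prodMk_left (𝕜 := ℝ) (K x) x.2); exact this
    rw [h2.fderiv, h3.fderiv]
    show (fderiv ℝ (fun q : (Fin N → ℝ) × (Fin ℓ → ℝ) => H q.1 q.2) (K x, x.2))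
        (fderiv ℝ K x v, v.2) = _
    have : v.2 = 0 := rfl
    rw [this]
    rfl
  -- expand the sum
  have hsplit : (∑ p, ∑ q, (fderiv ℝ (fun θ' => K (θ', x.2)) x.1 (Pi.single i 1)) p *
          exactOmega a (K x) p q *
          (XH (K x) x.2 q - (fderiv ℝ (fun φ' => K (x.1, φ')) x.2 αhat) q))
      = (∑ p, A p * (∑ q, exactOmega a (K x) p q * XH (K x) x.2 q))
        - ∑ p, ∑ q, A p * exactOmega a (K x) p q * B q := by
    rw [← Finset.sum_sub_distrib]
    refine Finset.sum_congr rfl fun p _ => ?_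
    rw [Finset.mul_sum, ← Finset.sum_sub_distrib]
    refine Finset.sum_congr rfl fun q _ => ?_
    rw [hAeq, hBeq]
    ring
  rw [hsplit]
  -- first term
  have hterm1 : (∑ p, A p * (∑ q, exactOmega a (K x) p q * XH (K x) x.2 q))
      = fderiv ℝ (fun y => H (K y) y.2) x v := by
    rw [hFd]
    rw [clm_expand (fderiv ℝ (fun z' => H z' x.2) (K x)) A]
    refine Finset.sum_congr rfl fun p _ => ?_
    rw [hXH (K x) x.2 p]
    simp [smul_eq_mul]
  -- second term
  have hterm2 : (∑ p, ∑ q, A p * exactOmega a (K x) p q * B q)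
      = ∑ q, (fderiv ℝ (fun y => a (K y) q) x v * fderiv ℝ (fun y => K y q) x w
              - fderiv ℝ (fun y => a (K y) q) x w * fderiv ℝ (fun y => K y q) x v) := by
    have hDaA : ∀ q, Da A q = ∑ p, A p * Da (Pi.single p 1) q := by
      intro q
      rw [clm_expand Da A, Finset.sum_apply]
      simp [smul_eq_mul]
    have hDaB : ∀ p, Da B p = ∑ q, B q * Da (Pi.single q 1) p := by
      intro p
      rw [clm_expand Da B, Finset.sum_apply]
      simp [smul_eq_mul]
    have key : ∀ p q, A p * exactOmega a (K x) p q * B q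
        = A p * Da (Pi.single p 1) q * B q - B q * Da (Pi.single q 1) p * A p := by
      intro p q
      rw [exactOmega, ← hDa]
      ring
    calc (∑ p, ∑ q, A p * exactOmega a (K x) p q * B q)
        = (∑ p, ∑ q, A p * Da (Pi.single p 1) q * B q)
          - ∑ p, ∑ q, B q * Da (Pi.single q 1) p * A p := by
            simp_rw [key, Finset.sum_sub_distrib]
      _ = (∑ q, Da A q * B q) - ∑ p, Da B p * A p := by
            congr 1
            · rw [Finset.sum_comm]
              refine Finset.sum_congr rfl fun q _ => ?_
              rw [hDaA q, Finset.sum_mul]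
            · refine Finset.sum_congr rfl fun p _ => ?_
              rw [hDaB p, Finset.sum_mul]
      _ = ∑ q, (fderiv ℝ (fun y => a (K y) q) x v * fderiv ℝ (fun y => K y q) x w
              - fderiv ℝ (fun y => a (K y) q) x w * fderiv ℝ (fun y => K y q) x v) := by
            rw [← Finset.sum_sub_distrib]
            refine Finset.sum_congr rfl fun q _ => ?_
            rw [hfq q v, hfq q w, hgq q v, hgq q w, hA, hB]
  rw [hterm1, hterm2]

theorem average_of_adapted_field_pairing_vanishesAux
    (N m ℓ : ℕ) (αhat : Fin ℓ → ℝ)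
    (a : (Fin N → ℝ) → (Fin N → ℝ)) (ha : ContDiff ℝ 1 a)
    (H : (Fin N → ℝ) → (Fin ℓ → ℝ) → ℝ)
    (hH : ContDiff ℝ 1 (fun q : (Fin N → ℝ) × (Fin ℓ → ℝ) => H q.1 q.2))
    (hHper : ∀ (z : Fin N → ℝ) (φv : Fin ℓ → ℝ) (q : Fin ℓ → ℤ),
      H z (φv + fun i => ((q i : ℝ))) = H z φv)
    (XH : (Fin N → ℝ) → (Fin ℓ → ℝ) → (Fin N → ℝ))
    (hXH : ∀ (z : Fin N → ℝ) (φv : Fin ℓ → ℝ) (p : Fin N),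
      (∑ q, exactOmega a z p q * XH z φv q)
        = fderiv ℝ (fun z' => H z' φv) z (Pi.single p 1))
    (K : (Fin m → ℝ) × (Fin ℓ → ℝ) → (Fin N → ℝ)) (hK : ContDiff ℝ 1 K)
    (hKper : ∀ (x : (Fin m → ℝ) × (Fin ℓ → ℝ)) (p : Fin m → ℤ) (q : Fin ℓ → ℤ),
      K (x.1 + fun i => ((p i : ℝ)), x.2 + fun i => ((q i : ℝ))) = K x) :
    ∀ i : Fin m,
      (∫ x in Set.Icc (0 : (Fin m → ℝ) × (Fin ℓ → ℝ)) 1,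
        ∑ p, ∑ q, (fderiv ℝ (fun θ' => K (θ', x.2)) x.1 (Pi.single i 1)) p *
          exactOmega a (K x) p q *
          (XH (K x) x.2 q - (fderiv ℝ (fun φ' => K (x.1, φ')) x.2 αhat) q))
        = 0 := by
  intro i
  set v : (Fin m → ℝ) × (Fin ℓ → ℝ) := ((Pi.single i 1 : Fin m → ℝ), (0 : Fin ℓ → ℝ)) with hv
  set w : (Fin m → ℝ) × (Fin ℓ → ℝ) := ((0 : Fin m → ℝ), αhat) with hw
  -- the auxiliary functions
  have hF : ContDiff ℝ 1 (fun y : (Fin m → ℝ) × (Fin ℓ → ℝ) => H (K y) y.2) :=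
    hH.comp (hK.prodMk contDiff_snd)
  have hFper : IsPer (fun y : (Fin m → ℝ) × (Fin ℓ → ℝ) => H (K y) y.2) := by
    intro x p q
    show H (K (x.1 + _, x.2 + _)) (x.2 + _) = _
    rw [hKper x p q]
    exact hHper (K x) x.2 q
  have hfqC : ∀ q : Fin N, ContDiff ℝ 1 (fun y : (Fin m → ℝ) × (Fin ℓ → ℝ) => a (K y) q) :=
    fun q => contDiff_pi.1 (ha.comp hK) q
  have hgqC : ∀ q : Fin N, ContDiff ℝ 1 (fun y : (Fin m → ℝ) × (Fin ℓ → ℝ) => K y q) :=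
    fun q => contDiff_pi.1 hK q
  have hfqP : ∀ q : Fin N, IsPer (fun y : (Fin m → ℝ) × (Fin ℓ → ℝ) => a (K y) q) := by
    intro q x p q'
    show a (K (x.1 + _, x.2 + _)) q = _
    rw [hKper x p q']
  have hgqP : ∀ q : Fin N, IsPer (fun y : (Fin m → ℝ) × (Fin ℓ → ℝ) => K y q) := by
    intro q x p q'
    show K (x.1 + _, x.2 + _) q = _
    rw [hKper x p q']
  -- rewrite the integrand pointwise
  rw [MeasureTheory.setIntegral_congr_fun measurableSet_Icc
    (fun x _ => pointwise_decomp N m ℓ αhat a ha H hH XH hXH K hK i x)]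
  -- split the integral
  have hint1 : MeasureTheory.IntegrableOn
      (fun x => fderiv ℝ (fun y : (Fin m → ℝ) × (Fin ℓ → ℝ) => H (K y) y.2) x v)
      (Set.Icc (0 : (Fin m → ℝ) × (Fin ℓ → ℝ)) 1) volume :=
    integrableOn_Icc_of_continuous (cont_fderiv_apply hF v)
  have hint2 : MeasureTheory.IntegrableOn
      (fun x => ∑ q, (fderiv ℝ (fun y : (Fin m → ℝ) × (Fin ℓ → ℝ) => a (K y) q) x v
                * fderiv ℝ (fun y : (Fin m → ℝ) × (Fin ℓ → ℝ) => K y q) x w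
              - fderiv ℝ (fun y : (Fin m → ℝ) × (Fin ℓ → ℝ) => a (K y) q) x w
                * fderiv ℝ (fun y : (Fin m → ℝ) × (Fin ℓ → ℝ) => K y q) x v))
      (Set.Icc (0 : (Fin m → ℝ) × (Fin ℓ → ℝ)) 1) volume := by
    refine integrableOn_Icc_of_continuous ?_
    refine continuous_finset_sum _ fun q _ => ?_
    exact ((cont_fderiv_apply (hfqC q) v).mul (cont_fderiv_apply (hgqC q) w)).sub
      ((cont_fderiv_apply (hfqC q) w).mul (cont_fderiv_apply (hgqC q) v))
  rw [MeasureTheory.integral_sub hint1 hint2]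
  rw [integral_fderiv_eq_zero _ hF hFper v]
  rw [MeasureTheory.integral_finset_sum _ (f := fun q x =>
      fderiv ℝ (fun y : (Fin m → ℝ) × (Fin ℓ → ℝ) => a (K y) q) x v
        * fderiv ℝ (fun y : (Fin m → ℝ) × (Fin ℓ → ℝ) => K y q) x w
      - fderiv ℝ (fun y : (Fin m → ℝ) × (Fin ℓ → ℝ) => a (K y) q) x w
        * fderiv ℝ (fun y : (Fin m → ℝ) × (Fin ℓ → ℝ) => K y q) x v) (fun q _ =>
    integrableOn_Icc_of_continuous (((cont_fderiv_apply (hfqC q) v).mul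
      (cont_fderiv_apply (hgqC q) w)).sub
      ((cont_fderiv_apply (hfqC q) w).mul (cont_fderiv_apply (hgqC q) v))))]
  have : ∀ q : Fin N, (∫ x in Set.Icc (0 : (Fin m → ℝ) × (Fin ℓ → ℝ)) 1,
      (fderiv ℝ (fun y : (Fin m → ℝ) × (Fin ℓ → ℝ) => a (K y) q) x v
        * fderiv ℝ (fun y : (Fin m → ℝ) × (Fin ℓ → ℝ) => K y q) x w
      - fderiv ℝ (fun y : (Fin m → ℝ) × (Fin ℓ → ℝ) => a (K y) q) x w
        * fderiv ℝ (fun y : (Fin m → ℝ) × (Fin ℓ → ℝ) => K y q) x v)) = 0 :=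
    fun q => integral_jacobian_pair _ _ (hfqC q) (hgqC q) (hfqP q) (hgqP q) v w
  simp [this]

end AuxAvg14

/-- the average over the torus of
`D_θKᵀ Ω(K) ( X_H(K,·) − D_φK·α̂ )` vanishes, where `Ω = Daᵀ − Da` and
`X_H` is the Hamiltonian vector field, `Ω(z)X_H(z,φ) = D_zH(z,φ)ᵀ`. -/
theorem average_of_adapted_field_pairing_vanishes
    (N m ℓ : ℕ) (αhat : Fin ℓ → ℝ)
    (a : (Fin N → ℝ) → (Fin N → ℝ)) (ha : ContDiff ℝ 1 a)
    (H : (Fin N → ℝ) → (Fin ℓ → ℝ) → ℝ)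
    (hH : ContDiff ℝ 1 (fun q : (Fin N → ℝ) × (Fin ℓ → ℝ) => H q.1 q.2))
    (hHper : ∀ (z : Fin N → ℝ) (φv : Fin ℓ → ℝ) (q : Fin ℓ → ℤ),
      H z (φv + fun i => ((q i : ℝ))) = H z φv)
    (XH : (Fin N → ℝ) → (Fin ℓ → ℝ) → (Fin N → ℝ))
    (hXH : ∀ (z : Fin N → ℝ) (φv : Fin ℓ → ℝ) (p : Fin N),
      (∑ q, exactOmega a z p q * XH z φv q)
        = fderiv ℝ (fun z' => H z' φv) z (Pi.single p 1))
    (K : (Fin m → ℝ) × (Fin ℓ → ℝ) → (Fin N → ℝ)) (hK : ContDiff ℝ 1 K)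
    (hKper : ∀ (x : (Fin m → ℝ) × (Fin ℓ → ℝ)) (p : Fin m → ℤ) (q : Fin ℓ → ℤ),
      K (x.1 + fun i => ((p i : ℝ)), x.2 + fun i => ((q i : ℝ))) = K x) :
    ∀ i : Fin m,
      (∫ x in Set.Icc (0 : (Fin m → ℝ) × (Fin ℓ → ℝ)) 1,
        ∑ p, ∑ q, (fderiv ℝ (fun θ' => K (θ', x.2)) x.1 (Pi.single i 1)) p *
          exactOmega a (K x) p q *
          (XH (K x) x.2 q - (fderiv ℝ (fun φ' => K (x.1, φ')) x.2 αhat) q))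
        = 0 := by
  exact average_of_adapted_field_pairing_vanishesAux N m ℓ αhat a ha H hH hHper XH hXH K hK hKper
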